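/- For every n ≥ 1, there exists a finite-dimensional representation V of B (n+1) over ℂ such that the restriction of V along the inclusion ι : B n →* B (n+1) is isomorphic, as a representation of B n, to the linearization ℂ[(ℤ/3ℤ)^n], i.e. the permutation representation of B n on the free ℂ-vector space with basis Fin n → ZMod 3. -/

import Mathlib

/-! Common setup: the signed symmetric group `B n` as a semidirect product,
its action on `Fin n → ZMod m`, and the inclusion `B n →* B (n+1)`. -/

/-- The additive automorphism of sign vectors induced by a permutation:
`ε ↦ ε ∘ σ⁻¹`. -/
def signAddAut (n : ℕ) (σ : Equiv.Perm (Fin n)) :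
    (Fin n → ZMod 2) ≃+ (Fin n → ZMod 2) :=
  { Equiv.arrowCongr σ (Equiv.refl (ZMod 2)) with
    map_add' := fun _ _ => rfl }

/-- The action of permutations on sign vectors, as a homomorphism to the
automorphism group of `Multiplicative (Fin n → ZMod 2)`. -/
def bSignHom (n : ℕ) :
    Equiv.Perm (Fin n) →* MulAut (Multiplicative (Fin n → ZMod 2)) where
  toFun σ := AddEquiv.toMultiplicative (signAddAut n σ)
  map_one' := by ext ε; rfl
  map_mul' σ τ := by ext ε; rfl

/-- The signed symmetric group on `n` letters, modelled as the semidirect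
product `(Fin n → ZMod 2) ⋊ Equiv.Perm (Fin n)`, where a permutation acts
on sign vectors by `σ • ε = ε ∘ σ⁻¹`. -/
abbrev B (n : ℕ) :=
  Multiplicative (Fin n → ZMod 2) ⋊[bSignHom n] Equiv.Perm (Fin n)

lemma neg_one_pow_val_add {M : Type*} [Monoid M] [HasDistribNeg M] (a b : ZMod 2) :
    (-1 : M) ^ (a + b).val = (-1 : M) ^ a.val * (-1 : M) ^ b.val := by
  fin_cases a <;> fin_cases b <;>
    first
    | change (-1 : M) ^ 0 = (-1 : M) ^ 0 * (-1 : M) ^ 0; simp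
    | change (-1 : M) ^ 1 = (-1 : M) ^ 0 * (-1 : M) ^ 1; simp
    | change (-1 : M) ^ 1 = (-1 : M) ^ 1 * (-1 : M) ^ 0; simp
    | change (-1 : M) ^ 0 = (-1 : M) ^ 1 * (-1 : M) ^ 1; simp

/-- The action of `B n` on `Fin n → ZMod m`: permute coordinates and negate
the coordinates with sign `1`, i.e. `((ε,σ) • x) i = (-1)^(ε i).val * x (σ⁻¹ i)`. -/
instance BAct (n m : ℕ) : MulAction (B n) (Fin n → ZMod m) where
  smul g x := fun i =>
    (-1 : ZMod m) ^ (Multiplicative.toAdd g.left i).val * x (g.right⁻¹ i)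
  one_smul x := by
    funext i
    show (-1 : ZMod m) ^ ((0 : ZMod 2)).val * x i = x i
    simp
  mul_smul g h x := by
    funext i
    show (-1 : ZMod m) ^ ((Multiplicative.toAdd g.left i)
        + (Multiplicative.toAdd h.left (g.right⁻¹ i))).val
        * x (h.right⁻¹ (g.right⁻¹ i))
      = (-1 : ZMod m) ^ (Multiplicative.toAdd g.left i).val
        * ((-1 : ZMod m) ^ (Multiplicative.toAdd h.left (g.right⁻¹ i)).val
          * x (h.right⁻¹ (g.right⁻¹ i)))
    rw [neg_one_pow_val_add, mul_assoc]

lemma bact_smul_def {n m : ℕ} (g : B n) (x : Fin n → ZMod m) (i : Fin n) :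
    (g • x) i = (-1 : ZMod m) ^ (Multiplicative.toAdd g.left i).val * x (g.right⁻¹ i) :=
  rfl

/-- Extension of a permutation of `Fin n` to `Fin (n+1)`, fixing the last letter. -/
def extendPermEquiv {n : ℕ} (σ : Equiv.Perm (Fin n)) : Equiv.Perm (Fin (n + 1)) where
  toFun := Fin.snoc (fun i => Fin.castSucc (σ i)) (Fin.last n)
  invFun := Fin.snoc (fun i => Fin.castSucc (σ⁻¹ i)) (Fin.last n)
  left_inv j := by
    induction j using Fin.lastCases with
    | last => simp
    | cast i => simp
  right_inv j := by
    induction j using Fin.lastCases with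
    | last => simp
    | cast i => simp

@[simp] lemma extendPermEquiv_castSucc {n : ℕ} (σ : Equiv.Perm (Fin n)) (i : Fin n) :
    extendPermEquiv σ (Fin.castSucc i) = Fin.castSucc (σ i) := by
  simp [extendPermEquiv]

@[simp] lemma extendPermEquiv_last {n : ℕ} (σ : Equiv.Perm (Fin n)) :
    extendPermEquiv σ (Fin.last n) = Fin.last n := by
  simp [extendPermEquiv]

@[simp] lemma extendPermEquiv_inv {n : ℕ} (σ : Equiv.Perm (Fin n)) :
    (extendPermEquiv σ)⁻¹ = extendPermEquiv σ⁻¹ := by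
  refine Equiv.ext fun j => ?_
  rw [Equiv.Perm.inv_def, Equiv.symm_apply_eq]
  induction j using Fin.lastCases with
  | last => simp
  | cast i => simp

@[simp] lemma extendPermEquiv_symm_castSucc {n : ℕ} (σ : Equiv.Perm (Fin n)) (i : Fin n) :
    (extendPermEquiv σ).symm (Fin.castSucc i) = Fin.castSucc (σ.symm i) := by
  rw [Equiv.symm_apply_eq]
  simp [Equiv.Perm.inv_def]

@[simp] lemma extendPermEquiv_symm_last {n : ℕ} (σ : Equiv.Perm (Fin n)) :
    (extendPermEquiv σ).symm (Fin.last n) = Fin.last n := by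
  rw [Equiv.symm_apply_eq]
  simp

/-- The embedding `Equiv.Perm (Fin n) →* Equiv.Perm (Fin (n+1))` extending
a permutation by the identity on the last letter. -/
def extendPerm (n : ℕ) : Equiv.Perm (Fin n) →* Equiv.Perm (Fin (n + 1)) where
  toFun := extendPermEquiv
  map_one' := by
    ext j
    induction j using Fin.lastCases with
    | last => simp
    | cast i => simp
  map_mul' σ τ := by
    ext j
    induction j using Fin.lastCases with
    | last => simp
    | cast i => simp

/-- The inclusion `B n →* B (n+1)`: extend the sign vector by `0` in the last
coordinate and the permutation by the identity on the last letter. -/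
def ιB (n : ℕ) : B n →* B (n + 1) where
  toFun g :=
    ⟨Multiplicative.ofAdd
      (Fin.snoc (Multiplicative.toAdd g.left) 0 : Fin (n + 1) → ZMod 2), extendPerm n g.right⟩
  map_one' := by
    refine SemidirectProduct.ext ?_ ?_
    · show Multiplicative.ofAdd
          (Fin.snoc (0 : Fin n → ZMod 2) (0 : ZMod 2) : Fin (n + 1) → ZMod 2) = 1
      have h : (Fin.snoc (0 : Fin n → ZMod 2) (0 : ZMod 2) : Fin (n + 1) → ZMod 2) = 0 := by
        funext j
        induction j using Fin.lastCases with
        | last => simp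
        | cast i => simp
      rw [h]; rfl
    · show extendPerm n 1 = 1
      exact map_one _
  map_mul' g h := by
    refine SemidirectProduct.ext ?_ ?_
    · show Multiplicative.ofAdd
          (Fin.snoc (Multiplicative.toAdd ((g * h).left)) 0 : Fin (n + 1) → ZMod 2) = _
      have key : (Fin.snoc (Multiplicative.toAdd ((g * h).left)) 0 : Fin (n + 1) → ZMod 2)
          = (Fin.snoc (Multiplicative.toAdd g.left) 0 : Fin (n + 1) → ZMod 2)
            + (Fin.snoc (Multiplicative.toAdd h.left) 0 : Fin (n + 1) → ZMod 2)
              ∘ ⇑((extendPermEquiv g.right)⁻¹) := by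
        funext j
        induction j using Fin.lastCases with
        | last => simp
        | cast i =>
          show (Fin.snoc (Multiplicative.toAdd g.left
              + (Multiplicative.toAdd h.left) ∘ ⇑(g.right⁻¹)) 0
              : Fin (n + 1) → ZMod 2) i.castSucc = _
          simp [Equiv.Perm.inv_def]
      rw [key]; rfl
    · show extendPerm n (g * h).right = _
      exact map_mul (extendPerm n) g.right h.right

-- === new development ===
noncomputable section SignedExt

open Finsupp Finset Multiplicative

/-- transfer matrix `ZMod 3`-basis → label basis -/
def cMat : ZMod 3 → Fin 3 → ℂ := fun a l =>
  if l = 0 then (if a = 0 then 1 else 0)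
  else if l = 1 then (if a = 0 then 0 else 1/2)
  else (if a = 1 then 1/2 else if a = 2 then -(1/2) else 0)

/-- inverse transfer matrix -/
def cInv : Fin 3 → ZMod 3 → ℂ := fun l a =>
  if l = 0 then (if a = 0 then 1 else 0)
  else if l = 1 then (if a = 0 then 0 else 1)
  else (if a = 1 then 1 else if a = 2 then -1 else 0)

lemma zmod3_cases (a : ZMod 3) : a = 0 ∨ a = 1 ∨ a = 2 := by revert a; decide

lemma fin3_cases (l : Fin 3) : l = 0 ∨ l = 1 ∨ l = 2 := by omega

lemma ortho1 (a b : ZMod 3) :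
    ∑ l : Fin 3, cMat a l * cInv l b = if a = b then 1 else 0 := by
  rw [Fin.sum_univ_three]
  rcases zmod3_cases a with ha | ha | ha <;> rcases zmod3_cases b with hb | hb | hb <;>
    subst ha <;> subst hb <;>
    simp (config := { decide := true }) only [cMat, cInv] <;> norm_num

lemma ortho2 (l m : Fin 3) :
    ∑ a : ZMod 3, cInv l a * cMat a m = if l = m then 1 else 0 := by
  rw [show (∑ a : ZMod 3, cInv l a * cMat a m)
      = cInv l 0 * cMat 0 m + cInv l 1 * cMat 1 m + cInv l 2 * cMat 2 m from
    Fin.sum_univ_three _]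
  rcases fin3_cases l with hl | hl | hl <;> rcases fin3_cases m with hm | hm | hm <;>
    subst hl <;> subst hm <;>
    simp (config := { decide := true }) only [cMat, cInv] <;> norm_num

lemma cMat_sign (t : ZMod 2) (a : ZMod 3) (l : Fin 3) :
    cMat ((-1 : ZMod 3) ^ t.val * a) l
      = (if l = 2 then (-1 : ℂ) ^ t.val else 1) * cMat a l := by
  rcases (show t = 0 ∨ t = 1 by revert t; decide) with ht | ht <;> subst ht <;>
    rcases zmod3_cases a with ha | ha | ha <;> subst ha <;>
    rcases fin3_cases l with hl | hl | hl <;> subst hl <;>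
    simp (config := { decide := true }) only [cMat,
      show ((1 : ZMod 2)).val = 1 from rfl, show ((0 : ZMod 2)).val = 0 from rfl,
      pow_one, pow_zero, one_mul,
      show ((-1 : ZMod 3) * 0) = 0 from by decide,
      show ((-1 : ZMod 3) * 1) = 2 from by decide,
      show ((-1 : ZMod 3) * 2) = 1 from by decide] <;> norm_num

/-- the "d"-statistic of a label string -/
def φ3 : Fin 3 → ZMod 3 := ![1, 2, 0]

def ψ3 : ZMod 3 → Fin 3 := fun z => if z = 1 then 0 else if z = 2 then 1 else 2

lemma φψ (z : ZMod 3) : φ3 (ψ3 z) = z := by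
  rcases zmod3_cases z with h | h | h <;> subst h <;> rfl

lemma ψφ (l : Fin 3) : ψ3 (φ3 l) = l := by
  rcases fin3_cases l with h | h | h <;> subst h <;> rfl

lemma φ3_inj : Function.Injective φ3 := fun a b h => by
  rw [← ψφ a, h, ψφ]

def dsum {k : ℕ} (ℓ : Fin k → Fin 3) : ZMod 3 := ∑ i, φ3 (ℓ i)

/-- index set of the extension representation -/
def Lset (n : ℕ) : Type := {ℓ : Fin (n + 1) → Fin 3 // dsum ℓ = 0}

instance (n : ℕ) : Fintype (Lset n) := Subtype.fintype _
instance (n : ℕ) : DecidableEq (Lset n) := Subtype.instDecidableEq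

lemma dsum_split {n : ℕ} (ℓ : Fin (n + 1) → Fin 3) :
    dsum ℓ = dsum (fun i => ℓ i.castSucc) + φ3 (ℓ (Fin.last n)) := by
  rw [dsum, Fin.sum_univ_castSucc]; rfl

/-- a member of `Lset n` is determined by its first `n` values -/
lemma Lset_ext {n : ℕ} (ℓ ℓ' : Lset n)
    (h : ∀ i : Fin n, ℓ.1 i.castSucc = ℓ'.1 i.castSucc) : ℓ = ℓ' := by
  have hd : dsum (fun i => ℓ.1 i.castSucc) = dsum (fun i => ℓ'.1 i.castSucc) :=
    Finset.sum_congr rfl fun i _ => congrArg φ3 (h i)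
  have h2 : φ3 (ℓ.1 (Fin.last n)) = φ3 (ℓ'.1 (Fin.last n)) := by
    have e1 := dsum_split ℓ.1
    have e2 := dsum_split ℓ'.1
    rw [ℓ.2] at e1; rw [ℓ'.2] at e2
    rw [hd] at e1
    linear_combination e2 - e1
  have hlast := φ3_inj h2
  refine Subtype.ext (funext fun j => ?_)
  induction j using Fin.lastCases with
  | last => exact hlast
  | cast i => exact h i

/-- the completion bijection -/
def βE (n : ℕ) : (Fin n → Fin 3) ≃ Lset n where
  toFun κ := ⟨Fin.snoc κ (ψ3 (- dsum κ)), by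
    rw [dsum_split]
    have h1 : (fun i => (Fin.snoc κ (ψ3 (- dsum κ)) : Fin (n+1) → Fin 3) i.castSucc) = κ := by
      funext i; simp
    rw [h1]
    simp only [Fin.snoc_last, φψ]
    ring⟩
  invFun ℓ := fun i => ℓ.1 i.castSucc
  left_inv κ := by funext i; simp
  right_inv ℓ := by
    refine Lset_ext _ _ fun i => ?_
    simp

@[simp] lemma βE_apply_castSucc {n : ℕ} (κ : Fin n → Fin 3) (i : Fin n) :
    ((βE n) κ).1 i.castSucc = κ i := by
  show (Fin.snoc κ _ : Fin (n+1) → Fin 3) i.castSucc = κ i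
  simp

/-- sign cocycle -/
def sg {k : ℕ} (g : B k) (ℓ : Fin k → Fin 3) : ℂ :=
  ∏ i, if ℓ i = 2 then (-1 : ℂ) ^ (Multiplicative.toAdd g.left i).val else 1

lemma sg_mul {k : ℕ} (g h : B k) (ℓ : Fin k → Fin 3) :
    sg (g * h) ℓ = sg g ℓ * sg h (ℓ ∘ g.right) := by
  have hleft : ∀ i, Multiplicative.toAdd (g * h).left i
      = Multiplicative.toAdd g.left i + Multiplicative.toAdd h.left (g.right⁻¹ i) :=
    fun i => rfl
  have step1 : sg (g * h) ℓ
      = (∏ i, if ℓ i = 2 then (-1 : ℂ) ^ (Multiplicative.toAdd g.left i).val else 1)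
        * ∏ i, (if ℓ i = 2 then (-1 : ℂ) ^ (Multiplicative.toAdd h.left (g.right⁻¹ i)).val
            else 1) := by
    rw [← Finset.prod_mul_distrib]
    refine Finset.prod_congr rfl fun i _ => ?_
    by_cases hi : ℓ i = 2
    · simp only [hi, if_pos, hleft i, neg_one_pow_val_add]
    · simp [hi]
  have step2 : (∏ i, (if ℓ i = 2 then
        (-1 : ℂ) ^ (Multiplicative.toAdd h.left (g.right⁻¹ i)).val else 1))
      = sg h (ℓ ∘ g.right) := by
    rw [← Equiv.prod_comp g.right
      (fun i => if ℓ i = 2 then (-1 : ℂ) ^ (Multiplicative.toAdd h.left (g.right⁻¹ i)).val else 1)]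
    exact Finset.prod_congr rfl fun j _ => by simp [sg, Function.comp]
  rw [step1, step2]; rfl

lemma sg_one {k : ℕ} (ℓ : Fin k → Fin 3) : sg (1 : B k) ℓ = 1 := by
  unfold sg
  refine Finset.prod_eq_one fun i _ => ?_
  have h0 : Multiplicative.toAdd (1 : B k).left i = 0 := rfl
  rw [h0]
  simp

/-- the monomial representation of `B (n+1)` -/
def ρV (n : ℕ) : Representation ℂ (B (n + 1)) (Lset n → ℂ) where
  toFun g :=
    { toFun := fun F ℓ => sg g ℓ.1 * F ⟨ℓ.1 ∘ g.right, by
        show dsum (fun i => ℓ.1 (g.right i)) = 0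
        rw [show dsum (fun i => ℓ.1 (g.right i)) = dsum ℓ.1 from
          Equiv.sum_comp g.right (fun i => φ3 (ℓ.1 i)), ℓ.2]⟩
      map_add' := fun F G => by funext ℓ; simp [mul_add]; exact mul_add _ _ _
      map_smul' := fun c F => by funext ℓ; simp [smul_eq_mul]; exact mul_left_comm (sg g ℓ.1) c _ }
  map_one' := by
    refine LinearMap.ext fun F => funext fun ℓ => ?_
    simp only [LinearMap.coe_mk, AddHom.coe_mk, sg_one, one_mul, LinearMap.id_coe, id_eq]
    congr 1
  map_mul' g h := by
    refine LinearMap.ext fun F => funext fun ℓ => ?_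
    simp only [LinearMap.coe_mk, AddHom.coe_mk, Module.End.mul_apply]
    rw [sg_mul, mul_assoc]
    congr 2

/-- the intertwiner from the permutation module to the extension module -/
def eMap (n : ℕ) : ((Fin n → ZMod 3) →₀ ℂ) →ₗ[ℂ] (Lset n → ℂ) :=
  Finsupp.lift _ ℂ _ (fun x => fun ℓ => ∏ i, cMat (x i) (ℓ.1 i.castSucc))

lemma eMap_single (n : ℕ) (x : Fin n → ZMod 3) (b : ℂ) :
    eMap n (Finsupp.single x b) = b • fun ℓ : Lset n => ∏ i, cMat (x i) (ℓ.1 i.castSucc) := by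
  unfold eMap
  rw [Finsupp.lift_apply, Finsupp.sum_single_index]
  simp

def wVec (n : ℕ) (ℓ : Lset n) : (Fin n → ZMod 3) →₀ ℂ :=
  ∑ y : Fin n → ZMod 3, (∏ i, cInv (ℓ.1 i.castSucc) (y i)) • Finsupp.single y 1

def e'Map (n : ℕ) : (Lset n → ℂ) →ₗ[ℂ] ((Fin n → ZMod 3) →₀ ℂ) where
  toFun F := ∑ ℓ : Lset n, F ℓ • wVec n ℓ
  map_add' F G := by simp [add_smul, Finset.sum_add_distrib]
  map_smul' c F := by simp [smul_smul, Finset.smul_sum]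

lemma sum_prod_swap {n : ℕ} {α : Type} [Fintype α] [DecidableEq α] (f : Fin n → α → ℂ) :
    ∑ y : Fin n → α, ∏ i, f i (y i) = ∏ i, ∑ a, f i a := by
  rw [Finset.prod_univ_sum (fun _ => (Finset.univ : Finset α)) f, Fintype.piFinset_univ]

lemma prod_ite_all {n : ℕ} (x y : Fin n → ZMod 3) :
    (∏ i, if x i = y i then (1 : ℂ) else 0) = if x = y then 1 else 0 := by
  by_cases h : x = y
  · subst h; simp
  · rw [if_neg h]
    obtain ⟨i, hi⟩ := Function.ne_iff.mp h
    exact Finset.prod_eq_zero (Finset.mem_univ i) (by rw [if_neg hi])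

lemma prod_ite_all' {n : ℕ} (ℓ ℓ' : Lset n) :
    (∏ i : Fin n, if ℓ.1 i.castSucc = ℓ'.1 i.castSucc then (1 : ℂ) else 0)
      = if ℓ = ℓ' then 1 else 0 := by
  by_cases h : ℓ = ℓ'
  · subst h; simp
  · rw [if_neg h]
    have hne : ¬ ∀ i : Fin n, ℓ.1 i.castSucc = ℓ'.1 i.castSucc := fun hc => h (Lset_ext _ _ hc)
    push_neg at hne
    obtain ⟨i, hi⟩ := hne
    exact Finset.prod_eq_zero (Finset.mem_univ i) (by rw [if_neg hi])

lemma eMap_wVec (n : ℕ) (ℓ : Lset n) :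
    eMap n (wVec n ℓ) = fun ℓ' : Lset n => if ℓ = ℓ' then 1 else 0 := by
  unfold wVec
  rw [map_sum]
  funext ℓ'
  rw [Finset.sum_apply]
  have h1 : ∀ y : Fin n → ZMod 3,
      (eMap n ((∏ i, cInv (ℓ.1 i.castSucc) (y i)) • Finsupp.single y 1)) ℓ'
        = ∏ i, (cInv (ℓ.1 i.castSucc) (y i) * cMat (y i) (ℓ'.1 i.castSucc)) := by
    intro y
    rw [map_smul, eMap_single]
    simp only [Pi.smul_apply, smul_eq_mul, one_smul]
    rw [← Finset.prod_mul_distrib]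
  rw [Finset.sum_congr rfl fun y _ => h1 y,
    sum_prod_swap (fun i a => cInv (ℓ.1 i.castSucc) a * cMat a (ℓ'.1 i.castSucc)),
    Finset.prod_congr rfl fun i _ => ortho2 (ℓ.1 i.castSucc) (ℓ'.1 i.castSucc)]
  exact prod_ite_all' ℓ ℓ'

lemma e'_eMap_single (n : ℕ) (x : Fin n → ZMod 3) :
    e'Map n (eMap n (Finsupp.single x 1)) = Finsupp.single x 1 := by
  rw [eMap_single]
  show (∑ ℓ : Lset n, ((1 : ℂ) • fun ℓ' : Lset n => ∏ i, cMat (x i) (ℓ'.1 i.castSucc)) ℓ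
      • wVec n ℓ) = _
  simp only [one_smul]
  unfold wVec
  rw [← Equiv.sum_comp (βE n)
    (fun ℓ : Lset n => (∏ i, cMat (x i) (ℓ.1 i.castSucc))
      • ∑ y : Fin n → ZMod 3, (∏ i, cInv (ℓ.1 i.castSucc) (y i)) • Finsupp.single y 1)]
  simp only [βE_apply_castSucc]
  have step : ∀ κ : Fin n → Fin 3, ((∏ i, cMat (x i) (κ i))
      • ∑ y : Fin n → ZMod 3, (∏ i, cInv (κ i) (y i)) • Finsupp.single y (1:ℂ))
      = ∑ y : Fin n → ZMod 3, (∏ i, cMat (x i) (κ i) * cInv (κ i) (y i)) • Finsupp.single y 1 := by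
    intro κ
    rw [Finset.smul_sum]
    exact Finset.sum_congr rfl fun y _ => by
      rw [smul_smul, ← Finset.prod_mul_distrib]
  rw [Finset.sum_congr rfl fun κ _ => step κ, Finset.sum_comm]
  have h2 : ∀ y : Fin n → ZMod 3,
      (∑ κ : Fin n → Fin 3, (∏ i, cMat (x i) (κ i) * cInv (κ i) (y i)) • Finsupp.single y (1:ℂ))
        = (if x = y then (1:ℂ) else 0) • Finsupp.single y 1 := by
    intro y
    rw [← Finset.sum_smul]
    congr 1
    rw [sum_prod_swap (fun i l => cMat (x i) l * cInv l (y i)),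
      Finset.prod_congr rfl fun i _ => ortho1 (x i) (y i)]
    exact prod_ite_all x y
  rw [Finset.sum_congr rfl fun y _ => h2 y]
  simp only [ite_smul, one_smul, zero_smul]
  rw [Finset.sum_ite_eq Finset.univ x (fun y => Finsupp.single y (1:ℂ))]
  simp


lemma comp1 (n : ℕ) : (eMap n).comp (e'Map n) = LinearMap.id := by
  refine LinearMap.ext fun F => ?_
  show eMap n (∑ ℓ : Lset n, F ℓ • wVec n ℓ) = F
  rw [map_sum]
  funext ℓ'
  rw [Finset.sum_apply]
  have h1 : ∀ ℓ : Lset n, (eMap n (F ℓ • wVec n ℓ)) ℓ' = F ℓ * (if ℓ = ℓ' then 1 else 0) := by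
    intro ℓ
    rw [map_smul, eMap_wVec]
    simp
  rw [Finset.sum_congr rfl fun ℓ _ => h1 ℓ]
  simp [mul_ite, mul_one, mul_zero, Finset.sum_ite_eq']

lemma comp2 (n : ℕ) : (e'Map n).comp (eMap n) = LinearMap.id := by
  refine Finsupp.lhom_ext fun x b => ?_
  show e'Map n (eMap n (Finsupp.single x b)) = Finsupp.single x b
  have hb : Finsupp.single x b = b • Finsupp.single x (1 : ℂ) := by
    rw [Finsupp.smul_single, smul_eq_mul, mul_one]
  rw [hb, map_smul, map_smul, e'_eMap_single]

/-- the intertwiner as a linear equivalence -/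
def eEquiv (n : ℕ) : ((Fin n → ZMod 3) →₀ ℂ) ≃ₗ[ℂ] (Lset n → ℂ) :=
  LinearEquiv.ofLinear (eMap n) (e'Map n) (comp1 n) (comp2 n)

set_option synthInstance.maxHeartbeats 1000000 in
set_option maxHeartbeats 2000000 in
lemma key (n : ℕ) (g : B n) (x : Fin n → ZMod 3) (ℓ : Lset n) :
    (∏ i, cMat ((g • x) i) (ℓ.1 i.castSucc))
      = sg (ιB n g) ℓ.1 * ∏ i, cMat (x i) (ℓ.1 ((extendPermEquiv g.right) i.castSucc)) := by
  have hsg : sg (ιB n g) ℓ.1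
      = ∏ i : Fin n, (if ℓ.1 i.castSucc = 2
          then (-1 : ℂ) ^ (Multiplicative.toAdd g.left i).val else 1) := by
    unfold sg
    rw [Fin.prod_univ_castSucc]
    have hlast : Multiplicative.toAdd (ιB n g).left (Fin.last n) = 0 := by
      show (Fin.snoc (Multiplicative.toAdd g.left) 0 : Fin (n+1) → ZMod 2) (Fin.last n) = 0
      simp
    rw [hlast]
    simp only [ZMod.val_zero, pow_zero, ite_self, mul_one]
    refine Finset.prod_congr rfl fun i _ => ?_
    have hc : Multiplicative.toAdd (ιB n g).left i.castSucc = Multiplicative.toAdd g.left i := by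
      show (Fin.snoc (Multiplicative.toAdd g.left) 0 : Fin (n+1) → ZMod 2) i.castSucc = _
      simp
    rw [hc]
  calc ∏ i, cMat ((g • x) i) (ℓ.1 i.castSucc)
      = ∏ i, ((if ℓ.1 i.castSucc = 2 then (-1 : ℂ) ^ (Multiplicative.toAdd g.left i).val else 1)
          * cMat (x (g.right⁻¹ i)) (ℓ.1 i.castSucc)) := by
        refine Finset.prod_congr rfl fun i _ => ?_
        rw [bact_smul_def, cMat_sign]
    _ = sg (ιB n g) ℓ.1 * ∏ i, cMat (x (g.right⁻¹ i)) (ℓ.1 i.castSucc) := by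
        rw [Finset.prod_mul_distrib, hsg]
    _ = _ := by
        congr 1
        rw [← Equiv.prod_comp g.right (fun j => cMat (x (g.right⁻¹ j)) (ℓ.1 j.castSucc))]
        refine Finset.prod_congr rfl fun i _ => ?_
        simp

set_option synthInstance.maxHeartbeats 1000000 in
set_option maxHeartbeats 2000000 in
/-- **Theorem (m = 3).** For every `n ≥ 1`, there is a finite-dimensional
representation `V` of `B (n+1)` over `ℂ` whose restriction along
`ιB n : B n →* B (n+1)` is isomorphic, as a representation of `B n`, to the
linearization `ℂ[(ℤ/3ℤ)^n]`, i.e. the permutation representation of `B n` on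
the free `ℂ`-vector space with basis `Fin n → ZMod 3`. -/
theorem exists_extension_zmod_three (n : ℕ) (hn : 1 ≤ n) :
    ∃ V : Rep ℂ (B (n + 1)), FiniteDimensional ℂ V.V ∧
      Nonempty ((Rep.resFunctor (ιB n)).obj V
        ≅ Rep.ofMulAction ℂ (B n) (Fin n → ZMod 3)) := by
  refine ⟨Rep.of (ρV n), inferInstanceAs (FiniteDimensional ℂ (Lset n → ℂ)), ⟨?_⟩⟩
  refine (Rep.mkIso (Representation.Equiv.mk
    ((MonoidAlgebra.coeffLinearEquiv ℂ).trans (eEquiv n)) ?_)).symm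
  intro g
  refine MonoidAlgebra.lhom_ext' fun x => LinearMap.ext fun b => ?_
  show eMap n (MonoidAlgebra.coeff ((Representation.ofMulAction ℂ (B n) (Fin n → ZMod 3)) g
      (MonoidAlgebra.single x b)))
      = (ρV n) (ιB n g) (eMap n (Finsupp.single x b))
  rw [Representation.ofMulAction_single, MonoidAlgebra.coeff_single, eMap_single, eMap_single,
    map_smul]
  congr 1
  funext ℓ
  exact key n g x ℓ
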